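/- arXiv:2601.23110 — 5 statements merged into one kernel-verified Lean document; each statement's English description precedes it below -/
import Mathlib

section
/- Let R be an associative ring with p²·R = 0 for a prime p, and let u, v ∈ R such that [u,v] = κ + p·w with κ central. Then [u^p, v] = p·(κ·u^{p-1} + ad(u)^{p-1}(w)). -/
open Finset

section Aux

variable {R : Type*} [Ring R]

private lemma end_mul_apply (f g : AddMonoid.End R) (x : R) : (f * g) x = f (g x) := rfl

private lemma end_add_apply (f g : AddMonoid.End R) (x : R) : (f + g) x = f x + g x := rfl

private lemma end_sub_apply (f g : AddMonoid.End R) (x : R) : (f - g) x = f x - g x := rfl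

private lemma end_neg_apply (f : AddMonoid.End R) (x : R) : (-f) x = -(f x) := rfl

private lemma mulLeft_apply' (u x : R) : (AddMonoid.End.mulLeft u) x = u * x := rfl

private lemma mulRight_apply' (u x : R) : (AddMonoid.End.mulRight u) x = x * u := rfl

private lemma end_sum_apply {ι : Type*} (s : Finset ι) (f : ι → AddMonoid.End R) (x : R) :
    (∑ i ∈ s, f i) x = ∑ i ∈ s, f i x := by
  induction s using Finset.cons_induction with
  | empty => rfl
  | cons a s ha ih => simp [Finset.sum_cons, end_add_apply, ih]

private lemma end_natCast_apply (n : ℕ) (x : R) : ((n : AddMonoid.End R)) x = n • x := rfl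

private lemma Lpow (u : R) (k : ℕ) (x : R) :
    ((AddMonoid.End.mulLeft u : AddMonoid.End R) ^ k) x = u ^ k * x := by
  induction k generalizing x with
  | zero => simp
  | succ n ih =>
      rw [pow_succ, end_mul_apply, ih]
      simp [pow_succ, mul_assoc, mulLeft_apply']

private lemma Mpow (u : R) (k : ℕ) (x : R) :
    ((AddMonoid.End.mulRight u : AddMonoid.End R) ^ k) x = x * u ^ k := by
  induction k generalizing x with
  | zero => simp
  | succ n ih =>
      rw [pow_succ, end_mul_apply, ih]
      simp [pow_succ', mul_assoc, mulRight_apply']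

private lemma neg_pow_apply (F : AddMonoid.End R) (j : ℕ) (y : R) :
    ((-F) ^ j) y = ((-1 : ℤ) ^ j) • ((F ^ j) y) := by
  induction j generalizing y with
  | zero => simp
  | succ n ih =>
      rw [pow_succ (-F) n, end_mul_apply, end_neg_apply, map_neg, ih]
      rw [pow_succ F n, end_mul_apply, pow_succ, mul_smul]
      simp

private lemma iter_eq_end (u w : R) (m : ℕ) :
    (fun x => u * x - x * u)^[m] w =
      (((AddMonoid.End.mulLeft u - AddMonoid.End.mulRight u : AddMonoid.End R)) ^ m) w := by
  induction m with
  | zero => simp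
  | succ n ih =>
      rw [Function.iterate_succ_apply', ih, pow_succ', end_mul_apply]
      simp [end_sub_apply, mulLeft_apply', mulRight_apply']

private lemma iter_expand (u w : R) (n : ℕ) :
    (fun x => u * x - x * u)^[n] w =
      ∑ k ∈ range (n + 1),
        ((-1 : ℤ) ^ (n - k) * ((n.choose k : ℤ))) • (u ^ k * w * u ^ (n - k)) := by
  have hc : Commute (AddMonoid.End.mulLeft u : AddMonoid.End R)
      (-(AddMonoid.End.mulRight u : AddMonoid.End R)) := by
    apply Commute.neg_right
    apply AddMonoidHom.ext
    intro x
    show u * (x * u) = (u * x) * u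
    rw [mul_assoc]
  rw [iter_eq_end, sub_eq_add_neg, hc.add_pow, end_sum_apply]
  refine Finset.sum_congr rfl fun k hk => ?_
  rw [end_mul_apply, end_mul_apply, end_natCast_apply, neg_pow_apply, Mpow, Lpow]
  rw [mul_smul]
  simp only [smul_mul_assoc, mul_smul_comm, natCast_zsmul, mul_assoc]

private lemma choose_zmod (p : ℕ) (hp : p.Prime) :
    ∀ k, k ≤ p - 1 → (((p - 1).choose k : ZMod p)) = (-1) ^ k := by
  intro k
  induction k with
  | zero => simp
  | succ k ih =>
      intro hk
      have hk' : k ≤ p - 1 := Nat.le_of_succ_le hk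
      have hlt : k + 1 < p := by omega
      have pascal : (p - 1).choose k + (p - 1).choose (k + 1) = p.choose (k + 1) := by
        have h1 : p - 1 + 1 = p := Nat.succ_pred_eq_of_pos hp.pos
        conv_rhs => rw [← h1]
        rw [Nat.choose_succ_succ]
      have hdvd : p ∣ p.choose (k + 1) :=
        Nat.Prime.dvd_choose_self hp (Nat.succ_ne_zero k) hlt
      have h0 : ((p.choose (k + 1) : ZMod p)) = 0 :=
        (ZMod.natCast_eq_zero_iff _ _).mpr hdvd
      have := congrArg (fun n : ℕ => (n : ZMod p)) pascal
      push_cast at this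
      rw [ih hk', h0] at this
      have : ((p - 1).choose (k + 1) : ZMod p) = -(-1) ^ k := by linear_combination this
      rw [this, pow_succ]
      ring

private lemma psmul_eq {R : Type*} [Ring R] (p : ℕ) (hp : p.Prime)
    (hchar : ((p : R)) ^ 2 = 0) (z : ℤ) (hz : ((z : ZMod p)) = 1) (x : R) :
    (p : R) * (z • x) = (p : R) * x := by
  have hdvd : (p : ℤ) ∣ z - 1 := by
    rw [← ZMod.intCast_zmod_eq_zero_iff_dvd]
    push_cast
    rw [hz]
    ring
  obtain ⟨c, hc⟩ := hdvd
  have hzc : z = 1 + p * c := by omega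
  rw [zsmul_eq_mul]
  have hzr : ((z : R)) = 1 + (p : R) * (c : R) := by
    rw [hzc]; push_cast; ring
  rw [hzr, add_mul, one_mul, mul_add]
  have hpp : (p : R) * (p : R) = 0 := by rw [← sq]; exact hchar
  have : (p : R) * ((p : R) * (c : R) * x) = 0 := by
    rw [← mul_assoc, ← mul_assoc, hpp, zero_mul, zero_mul]
  rw [this, add_zero]

private lemma commA {R : Type*} [Ring R] (p : ℕ) (u v κ w : R)
    (hκ : ∀ x : R, κ * x = x * κ)
    (huv : u * v - v * u = κ + (p : R) * w) :
    ∀ n : ℕ, u ^ (n + 1) * v - v * u ^ (n + 1) =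
      (n + 1) • (κ * u ^ n) + (p : R) * ∑ i ∈ range (n + 1), u ^ i * w * u ^ (n - i) := by
  intro n
  induction n with
  | zero => simpa using huv
  | succ n ih =>
      have key : u ^ (n + 2) * v - v * u ^ (n + 2) =
          u * (u ^ (n + 1) * v - v * u ^ (n + 1)) + (u * v - v * u) * u ^ (n + 1) := by
        rw [show u ^ (n + 2) = u * u ^ (n + 1) from by rw [← pow_succ']]
        noncomm_ring
      rw [key, ih, huv]
      have hpc : ∀ y : R, u * ((p : R) * y) = (p : R) * (u * y) := fun y => by
        rw [← mul_assoc, ← (Nat.cast_commute p u).eq, mul_assoc]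
      rw [mul_add, mul_smul_comm, hpc, add_mul, Finset.mul_sum]
      have hsum : ∑ i ∈ range (n + 1), u * (u ^ i * w * u ^ (n - i)) =
          ∑ i ∈ range (n + 1), u ^ (i + 1) * w * u ^ (n + 1 - (i + 1)) := by
        refine Finset.sum_congr rfl fun i hi => ?_
        rw [← mul_assoc, ← mul_assoc, ← pow_succ']
        congr 2
        omega
      rw [hsum]
      have htarget : ∑ i ∈ range (n + 2), u ^ i * w * u ^ (n + 1 - i) =
          (∑ i ∈ range (n + 1), u ^ (i + 1) * w * u ^ (n + 1 - (i + 1))) + w * u ^ (n + 1) := by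
        rw [Finset.sum_range_succ']
        simp
      rw [htarget, mul_add]
      have hκu : u * (κ * u ^ n) = κ * u ^ (n + 1) := by
        rw [← mul_assoc, ← hκ, mul_assoc, ← pow_succ']
      rw [hκu, succ_nsmul (κ * u ^ (n + 1)) (n + 1)]
      have hpw : (p : R) * w * u ^ (n + 1) = (p : R) * (w * u ^ (n + 1)) := by
        rw [mul_assoc]
      rw [hpw]
      abel

end Aux

theorem comm_pow_p {R : Type*} [Ring R] (p : ℕ) (hp : p.Prime)
    (hchar : ((p : R)) ^ 2 = 0) (u v κ w : R)
    (hκ : ∀ x : R, κ * x = x * κ)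
    (huv : u * v - v * u = κ + (p : R) * w) :
    u ^ p * v - v * u ^ p =
      (p : R) * (κ * u ^ (p - 1) + (fun x => u * x - x * u)^[p - 1] w) := by
  have hp1 : p - 1 + 1 = p := Nat.succ_pred_eq_of_pos hp.pos
  have hA := commA p u v κ w hκ huv (p - 1)
  rw [hp1] at hA
  rw [hA, iter_expand]
  rw [mul_add, Finset.mul_sum, Finset.mul_sum]
  have hterm : ∀ k ∈ range (p - 1 + 1),
      (p : R) * (((-1 : ℤ) ^ (p - 1 - k) * (((p - 1).choose k : ℤ))) •
        (u ^ k * w * u ^ (p - 1 - k))) = (p : R) * (u ^ k * w * u ^ (p - 1 - k)) := by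
    intro k hk
    have hkle : k ≤ p - 1 := Nat.lt_succ_iff.mp (Finset.mem_range.mp hk)
    apply psmul_eq p hp hchar
    push_cast
    rw [choose_zmod p hp k hkle, ← pow_add]
    have : p - 1 - k + k = p - 1 := by omega
    rw [this]
    rcases hp.eq_two_or_odd' with h2 | hodd
    · subst h2; decide
    · exact Even.neg_one_pow (Nat.Odd.sub_odd hodd odd_one)
  rw [Finset.sum_congr rfl hterm, hp1, nsmul_eq_mul]
end

section
/- (Jacobson's formula special case) Let R be an associative algebra over Z/pZ for a prime p, and let C ⊆ R be a commutative subalgebra. Let a, b ∈ R with b ∈ C, ad(a)(C) ⊆ C, and suppose all elements of C commute with each other. Then (a+b)^p = a^p + b^p + ad(a)^{p-1}(b). -/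
open Finset Polynomial

lemma cast_choose_sub_one {R : Type*} [Ring R] {p : ℕ} (hp : p.Prime) [CharP R p] :
    ∀ j, j ≤ p - 1 → (((p - 1).choose j : ℕ) : R) = (-1) ^ j := by
  intro j
  induction j with
  | zero => simp
  | succ j ih =>
    intro hj
    have hj' : j ≤ p - 1 := Nat.le_of_succ_le hj
    have hpascal : p.choose (j + 1) = (p - 1).choose j + (p - 1).choose (j + 1) := by
      conv_lhs => rw [← Nat.succ_pred_eq_of_pos hp.pos]
      exact Nat.choose_succ_succ _ _
    have hdvd : (p : ℕ) ∣ p.choose (j + 1) :=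
      hp.dvd_choose_self (Nat.succ_ne_zero j) (by omega)
    have h0 : ((p.choose (j + 1) : ℕ) : R) = 0 := by
      obtain ⟨c, hc⟩ := hdvd
      simp [hc, CharP.cast_eq_zero R p]
    have h1 : (((p - 1).choose j : ℕ) : R) + (((p - 1).choose (j + 1) : ℕ) : R) = 0 := by
      rw [← Nat.cast_add, ← hpascal, h0]
    have h2 : (((p - 1).choose (j + 1) : ℕ) : R) = -(((p - 1).choose j : ℕ) : R) :=
      eq_neg_of_add_eq_zero_right h1
    rw [h2, ih hj', pow_succ, mul_neg_one]

/-- expansion of iterated `ad` in any ring -/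
lemma ad_iterate_eq_sum {A : Type*} [Ring A] (z y : A) (n : ℕ) :
    (fun x => z * x - x * z)^[n] y
      = ∑ m ∈ Finset.range (n + 1),
          ((-1 : A) ^ (n - m) * ((n.choose m : ℕ) : A)) • (z ^ m * y * z ^ (n - m)) := by
  classical
  set L : Module.End ℤ A := LinearMap.mulLeft ℤ z with hL
  set Rr : Module.End ℤ A := LinearMap.mulRight ℤ z with hRr
  have hcomm : Commute L (-Rr) := (LinearMap.commute_mulLeft_right z z).neg_right
  have hfun : (fun x => z * x - x * z) = fun x => (L + (-Rr)) x := by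
    funext x
    simp [hL, hRr, sub_eq_add_neg]
  have hit : (fun x => z * x - x * z)^[n] y = ((L + (-Rr)) ^ n) y := by
    rw [hfun, Module.End.pow_apply]
  rw [hit, hcomm.add_pow n, LinearMap.sum_apply]
  refine Finset.sum_congr rfl fun m hm => ?_
  have hneg : (-Rr) ^ (n - m) = (-1 : Module.End ℤ A) ^ (n - m) * Rr ^ (n - m) := by
    rw [neg_pow]
  rw [Module.End.mul_apply, Module.End.mul_apply, Module.End.natCast_apply,
    hneg, Module.End.mul_apply]
  have h1 : ((-1 : Module.End ℤ A) ^ (n - m)) ((Rr ^ (n - m)) ((n.choose m : ℕ) • y))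
      = ((-1 : A) ^ (n - m)) • ((Rr ^ (n - m)) ((n.choose m : ℕ) • y)) := by
    rcases Nat.even_or_odd (n - m) with he | ho
    · rw [he.neg_one_pow, he.neg_one_pow]
      simp
    · rw [ho.neg_one_pow, ho.neg_one_pow]
      simp
  rw [h1]
  rw [LinearMap.pow_mulRight, LinearMap.pow_mulLeft]
  simp only [LinearMap.map_smul, LinearMap.mulRight_apply, LinearMap.mulLeft_apply]
  have c1 : ((-1 : A) ^ (n - m) * ((n.choose m : ℕ) : A)) * z ^ m
      = z ^ m * ((-1 : A) ^ (n - m) * ((n.choose m : ℕ) : A)) :=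
    (((Commute.neg_one_left (z ^ m)).pow_left _).mul_left ((n.choose m).cast_commute (z ^ m))).eq
  simp only [smul_eq_mul, nsmul_eq_mul, ← mul_assoc]
  rw [mul_assoc (z ^ m) ((-1 : A) ^ (n - m)), ← c1]

example : True := trivial

lemma derivative_pow_noncomm {S : Type*} [Semiring S] (f : S[X]) (n : ℕ) :
    derivative (f ^ n) = ∑ j ∈ Finset.range n, f ^ j * derivative f * f ^ (n - 1 - j) := by
  induction n with
  | zero => simp
  | succ n ih =>
    rw [pow_succ, derivative_mul, ih, Finset.sum_range_succ, Finset.sum_mul]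
    congr 1
    · refine Finset.sum_congr rfl fun j hj => ?_
      have hjn : j < n := Finset.mem_range.mp hj
      have h1 : n - 1 - j + 1 = n - j := by omega
      have h2 : n + 1 - 1 - j = n - j := by omega
      rw [mul_assoc, ← pow_succ, h1, h2]
    · simp

theorem jacobson_special {R : Type*} [Ring R] (p : ℕ) (hp : p.Prime) [CharP R p]
    (C : Subring R) (hC : ∀ x ∈ C, ∀ y ∈ C, x * y = y * x)
    (a b : R) (hb : b ∈ C) (ha : ∀ c ∈ C, a * c - c * a ∈ C) :
    (a + b) ^ p = a ^ p + b ^ p + (fun x => a * x - x * a)^[p - 1] b := by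
  haveI : CharP R[X] p := charP_of_injective_ringHom (R := R) (A := R[X]) Polynomial.C_injective p
  set D : R → R := fun x => a * x - x * a with hD
  have hp2 : 2 ≤ p := hp.two_le
  have hbC : ∀ k, D^[k] b ∈ C := by
    intro k
    induction k with
    | zero => simpa using hb
    | succ k ih => rw [Function.iterate_succ_apply']; exact ha _ ih
  set z : R[X] := Polynomial.C a * X + Polynomial.C b with hz
  have had : ∀ c : R, z * Polynomial.C c - Polynomial.C c * z
      = Polynomial.C (a * c - c * a) * X + Polynomial.C (b * c - c * b) := by
    intro c
    rw [hz, add_mul, mul_add, mul_assoc (Polynomial.C a) X (Polynomial.C c), X_mul,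
      ← mul_assoc, ← Polynomial.C_mul, ← Polynomial.C_mul, ← Polynomial.C_mul,
      ← mul_assoc (Polynomial.C c), ← Polynomial.C_mul,
      Polynomial.C_sub, Polynomial.C_sub, sub_mul]
    abel
  have hXk : ∀ (w : R[X]) (k : ℕ), z * (w * X ^ k) - (w * X ^ k) * z
      = (z * w - w * z) * X ^ k := by
    intro w k
    rw [mul_assoc, X_pow_mul, ← mul_assoc, ← mul_assoc, sub_mul]
  have hAd : ∀ k, (fun w => z * w - w * z)^[k + 1] (Polynomial.C a)
      = -(Polynomial.C (D^[k + 1] b)) * X ^ k := by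
    intro k
    induction k with
    | zero =>
      simp only [zero_add, Function.iterate_one]
      rw [had a, sub_self, map_zero, zero_mul, zero_add, pow_zero, mul_one]
      rw [← neg_sub (a * b) (b * a), map_neg]
    | succ k ih =>
      rw [Function.iterate_succ_apply', ih, ← map_neg, hXk, had]
      have e1 : a * -(D^[k + 1] b) - -(D^[k + 1] b) * a = -(D^[k + 1 + 1] b) := by
        have h3 : D^[k + 1 + 1] b = a * (D^[k+1] b) - (D^[k+1] b) * a := by
          rw [Function.iterate_succ_apply']
        rw [h3, mul_neg, neg_mul, sub_neg_eq_add, neg_sub]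
        exact neg_add_eq_sub _ _
      have e2 : b * -(D^[k + 1] b) - -(D^[k + 1] b) * b = 0 := by
        have h := hC b hb _ (hbC (k + 1))
        rw [mul_neg, neg_mul, h]
        exact sub_self _
      rw [e1, e2, map_zero, add_zero, map_neg, neg_mul, neg_mul, mul_assoc, ← pow_succ', neg_mul]
  have hdz : derivative z = Polynomial.C a := by
    rw [hz]; simp
  have hone : ((-1 : R[X])) ^ (p - 1) = 1 := by
    rcases hp.eq_two_or_odd' with h2 | hodd
    · subst h2
      norm_num
      have h2' : (2 : R[X]) = 0 := by exact_mod_cast CharP.cast_eq_zero R[X] 2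
      rw [neg_eq_iff_add_eq_zero, one_add_one_eq_two]
      exact h2'
    · exact (Nat.Odd.sub_odd hodd odd_one).neg_one_pow
  have hder : derivative (z ^ p) = -(Polynomial.C (D^[p - 1] b)) * X ^ (p - 2) := by
    rw [derivative_pow_noncomm, hdz]
    have hrw := ad_iterate_eq_sum z (Polynomial.C a) (p - 1)
    have hco : ∀ m ∈ Finset.range (p - 1 + 1),
        ((-1 : R[X]) ^ (p - 1 - m) * (((p - 1).choose m : ℕ) : R[X]))
          • (z ^ m * Polynomial.C a * z ^ (p - 1 - m))
        = z ^ m * Polynomial.C a * z ^ (p - 1 - m) := by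
      intro m hm
      have hm' : m ≤ p - 1 := Nat.lt_succ_iff.mp (Finset.mem_range.mp hm)
      rw [cast_choose_sub_one hp m hm', ← pow_add]
      have hpm : p - 1 - m + m = p - 1 := by omega
      rw [hpm, hone, one_smul]
    rw [Finset.sum_congr rfl hco] at hrw
    have hran : p - 1 + 1 = p := by omega
    rw [hran] at hrw
    rw [← hrw]
    have hk : p - 1 = (p - 2) + 1 := by omega
    rw [hk, hAd (p - 2)]
  set u : R := D^[p - 1] b with hu
  set Q : R[X] := Polynomial.C (a ^ p) * X ^ p + Polynomial.C u * X ^ (p - 1)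
      + Polynomial.C (b ^ p) with hQ
  have hderQ : derivative (z ^ p - Q) = 0 := by
    rw [derivative_sub, hder, hQ, derivative_add, derivative_add,
      derivative_C_mul_X_pow, derivative_C_mul_X_pow, derivative_C]
    have h1 : (a ^ p * ((p : ℕ) : R)) = 0 := by rw [CharP.cast_eq_zero R p, mul_zero]
    have h2 : u * (((p - 1 : ℕ) : ℕ) : R) = -u := by
      have hc : (((p - 1 : ℕ) : ℕ) : R) = -1 := by
        rw [Nat.cast_sub hp.one_le, CharP.cast_eq_zero R p, Nat.cast_one, zero_sub]
      rw [hc, mul_neg_one]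
    have h3 : p - 1 - 1 = p - 2 := by omega
    rw [h1, h2, h3, map_zero, zero_mul, map_neg, neg_mul, zero_add, add_zero]
    exact sub_self _
  have hcoeffker : ∀ k : ℕ, 1 ≤ k → (z ^ p - Q).coeff k * ((k : ℕ) : R) = 0 := by
    intro k hk
    have h := congrArg (fun f : R[X] => f.coeff (k - 1)) hderQ
    simp only [Polynomial.coeff_zero] at h
    rw [Polynomial.coeff_derivative] at h
    have hk1 : k - 1 + 1 = k := by omega
    rw [hk1] at h
    have hcast : ((k - 1 : ℕ) : R) + 1 = ((k : ℕ) : R) := by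
      have h4 := congrArg (fun n : ℕ => (n : R)) hk1
      push_cast at h4
      exact h4
    rw [hcast] at h
    exact h
  have hcoeffzero : ∀ k : ℕ, 1 ≤ k → k ≤ p - 1 → (z ^ p - Q).coeff k = 0 := by
    intro k hk1 hk2
    have hcop : Nat.Coprime p k := (Nat.Prime.coprime_iff_not_dvd hp).mpr (by
      intro hdvd
      have := Nat.le_of_dvd (by omega) hdvd
      omega)
    have hbez := Nat.gcd_eq_gcd_ab p k
    have hg1 : Nat.gcd p k = 1 := hcop
    rw [hg1] at hbez
    have hcastZ := congrArg (fun t : ℤ => ((t : ℤ) : R)) hbez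
    push_cast at hcastZ
    rw [CharP.cast_eq_zero R p, zero_mul, zero_add] at hcastZ
    -- hcastZ : (1 : R) = (k : R) * gcdB
    calc (z ^ p - Q).coeff k = (z ^ p - Q).coeff k * 1 := (mul_one _).symm
      _ = (z ^ p - Q).coeff k * (((k : ℕ) : R) * ((Nat.gcdB p k : ℤ) : R)) := by rw [← hcastZ]
      _ = ((z ^ p - Q).coeff k * ((k : ℕ) : R)) * ((Nat.gcdB p k : ℤ) : R) := by
          rw [mul_assoc]
      _ = 0 := by rw [hcoeffker k hk1, zero_mul]
  have hdegz : z.natDegree ≤ 1 := by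
    rw [hz]
    compute_degree
  have hF : z ^ p - Q = 0 := by
    apply Polynomial.ext
    intro k
    rw [Polynomial.coeff_zero, Polynomial.coeff_sub]
    rcases Nat.lt_or_ge k 1 with h0 | h1
    · have hk : k = 0 := by omega
      subst hk
      have hz0 : (z ^ p).coeff 0 = b ^ p := by
        have hzc : Polynomial.constantCoeff z = b := by
          rw [hz]; simp
        rw [show (z ^ p).coeff 0 = Polynomial.constantCoeff (z ^ p) from rfl, map_pow, hzc]
      rw [hz0, hQ]
      simp only [Polynomial.coeff_add, Polynomial.coeff_C_mul, Polynomial.coeff_X_pow,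
        Polynomial.coeff_C]
      rw [if_neg (by omega : ¬ (0 = p)), if_neg (by omega : ¬ (0 = p - 1))]
      norm_num
    rcases Nat.lt_or_ge k p with hlt | hge
    · have := hcoeffzero k h1 (by omega)
      rw [Polynomial.coeff_sub] at this
      exact this
    rcases Nat.eq_or_lt_of_le hge with heq | hgt
    · subst heq
      have hzp' : (z ^ p).coeff p = a ^ p := by
        have hcp := Polynomial.coeff_pow_of_natDegree_le (p := z) (n := 1) (m := p) hdegz
        rw [mul_one] at hcp
        rw [hcp]
        congr 1
        rw [hz]
        simp
      rw [hzp', hQ]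
      simp only [Polynomial.coeff_add, Polynomial.coeff_C_mul, Polynomial.coeff_X_pow,
        Polynomial.coeff_C]
      rw [if_neg (by omega : ¬ (p = p - 1)), if_neg (by omega : ¬ (p = 0))]
      norm_num
    · have hd1 : (z ^ p).natDegree < k := by
        refine lt_of_le_of_lt (Polynomial.natDegree_pow_le.trans ?_) hgt
        calc p * z.natDegree ≤ p * 1 := Nat.mul_le_mul_left p hdegz
          _ = p := mul_one p
      rw [Polynomial.coeff_eq_zero_of_natDegree_lt hd1, hQ]
      simp only [Polynomial.coeff_add, Polynomial.coeff_C_mul, Polynomial.coeff_X_pow,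
        Polynomial.coeff_C]
      rw [if_neg (by omega : ¬ (k = p)), if_neg (by omega : ¬ (k = p - 1)),
        if_neg (by omega : ¬ (k = 0))]
      norm_num
  have hzpQ : z ^ p = Q := sub_eq_zero.mp hF
  have hcomm1 : ∀ r : R, Commute ((RingHom.id R) r) (1 : R) := fun r => Commute.one_right _
  set ε : R[X] →+* R := eval₂RingHom' (RingHom.id R) 1 hcomm1 with hε
  have hCc : ∀ c : R, ε (Polynomial.C c) = c := by
    intro c
    rw [hε]
    simp
  have hXc : ε X = 1 := by
    rw [hε]
    simp
  have hfin := congrArg ε hzpQ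
  rw [hQ, hz] at hfin
  simp only [map_pow, map_add, map_mul, hCc, hXc, one_pow, mul_one] at hfin
  rw [hfin, hu]
  abel
end

section
/- Let R be a unique factorization domain and φ : Mat_m(R) → Mat_m(R) a ring homomorphism (preserving 1). Then there exists an invertible matrix G ∈ GL_m(R) and a ring endomorphism φ_c : R → R such that φ((a_{ij})) = G · (φ_c(a_{ij})) · G^{-1} for all matrices (a_{ij}). Moreover G is unique up to multiplication by a unit of R. -/
open Matrix

lemma matrixUnits_det_ne_zero {K : Type*} [CommRing K] [IsDomain K] {m : ℕ}
    (F : Fin m → Fin m → Matrix (Fin m) (Fin m) K)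
    (hmul : ∀ i j k l, F i j * F k l = if j = k then F i l else 0)
    (z : Fin m) (r : Fin m → K) (hr : r ≠ 0) (hFr : F z z *ᵥ r = r) :
    (Matrix.of fun a k => (F k z *ᵥ r) a).det ≠ 0 := by
  classical
  set G : Matrix (Fin m) (Fin m) K := Matrix.of fun a k => (F k z *ᵥ r) a with hGdef
  intro h
  obtain ⟨v, hv, hGv⟩ := Matrix.exists_mulVec_eq_zero_iff.2 h
  apply hv
  obtain ⟨i, hri⟩ := Function.ne_iff.1 hr
  have key : ∀ j, v j • r = 0 := by
    intro j
    have h1 : G *ᵥ v = ∑ k, v k • (F k z *ᵥ r) := by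
      funext a
      simp [hGdef, Matrix.mulVec, dotProduct, Finset.sum_apply, mul_comm]
    have h2 : F z j *ᵥ (G *ᵥ v) = v j • r := by
      rw [h1]
      have hlin : F z j *ᵥ (∑ k, v k • (F k z *ᵥ r)) = ∑ k, v k • (F z j *ᵥ (F k z *ᵥ r)) := by
        simp [← Matrix.mulVecLin_apply, map_sum, _root_.map_smul, -Matrix.mulVecBilin_apply]
      rw [hlin]
      have hterm : ∀ k : Fin m, F z j *ᵥ (F k z *ᵥ r) = if j = k then r else 0 := by
        intro k
        rw [Matrix.mulVec_mulVec, hmul]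
        split
        · exact hFr
        · simp
      simp only [hterm, smul_ite, smul_zero]
      simp [Finset.sum_ite_eq]
    rw [hGv, Matrix.mulVec_zero] at h2
    exact h2.symm
  funext j
  have := congrFun (key j) i
  simp only [Pi.smul_apply, smul_eq_mul, Pi.zero_apply] at this ⊢
  exact (mul_eq_zero.1 this).resolve_right hri

theorem matrix_ring_hom_conjugation {R : Type*} [CommRing R] [IsDomain R]
    [UniqueFactorizationMonoid R] (m : ℕ)
    (φ : Matrix (Fin m) (Fin m) R →+* Matrix (Fin m) (Fin m) R) :
    ∃ G : GL (Fin m) R, ∃ φc : R →+* R,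
      (∀ A : Matrix (Fin m) (Fin m) R, φ A = (G : Matrix (Fin m) (Fin m) R) * A.map φc * (↑G⁻¹ : Matrix (Fin m) (Fin m) R)) ∧
      ∀ G' : GL (Fin m) R,
        (∃ φc' : R →+* R, ∀ A : Matrix (Fin m) (Fin m) R,
          φ A = (G' : Matrix (Fin m) (Fin m) R) * A.map φc' * (↑G'⁻¹ : Matrix (Fin m) (Fin m) R)) →
        ∃ u : Rˣ, (G' : Matrix (Fin m) (Fin m) R) = (u : R) • (G : Matrix (Fin m) (Fin m) R) := by
  classical
  letI : NormalizationMonoid R := (UniqueFactorizationMonoid.normalizationMonoid (α := R)).toNormalizationMonoid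
  letI : NormalizedGCDMonoid R := UniqueFactorizationMonoid.toNormalizedGCDMonoid R
  rcases Nat.eq_zero_or_pos m with hm | hm
  · subst hm
    refine ⟨1, RingHom.id R, fun A => ?_, fun G' _ => ⟨1, ?_⟩⟩
    · ext i j; exact i.elim0
    · ext i j; exact i.elim0
  haveI : NeZero m := ⟨hm.ne'⟩
  set z : Fin m := ⟨0, hm⟩ with hz
  set E : Fin m → Fin m → Matrix (Fin m) (Fin m) R := fun i j => single i j 1 with hE
  set F : Fin m → Fin m → Matrix (Fin m) (Fin m) R := fun i j => φ (E i j) with hF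
  have hFdef : ∀ i j, φ (E i j) = F i j := fun _ _ => rfl
  have hEmul : ∀ i j k l : Fin m, E i j * E k l = if j = k then E i l else 0 := by
    intro i j k l
    simp only [hE]
    by_cases h : j = k
    · subst h
      rw [Matrix.single_mul_single_same, one_mul, if_pos rfl]
    · rw [Matrix.single_mul_single_of_ne (h := h), if_neg h]
  have hmul : ∀ i j k l : Fin m, F i j * F k l = if j = k then F i l else 0 := by
    intro i j k l
    simp only [hF]
    rw [← _root_.map_mul, hEmul]
    split <;> simp
  have hEone : ∑ i, E i i = (1 : Matrix (Fin m) (Fin m) R) := by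
    simp only [hE]
    ext a c
    rw [Matrix.sum_apply]
    by_cases h : a = c
    · subst h
      rw [Matrix.one_apply_eq]
      rw [Finset.sum_eq_single a (fun x _ hx => by simp [Matrix.single, hx]) (by simp)]
      simp [Matrix.single]
    · rw [Matrix.one_apply_ne h]
      apply Finset.sum_eq_zero
      intro x _
      simp only [Matrix.single, Matrix.of_apply, ite_eq_right_iff, and_imp]
      intro h1 h2
      exact absurd (h1.symm.trans h2) h
  have hFone : ∑ i, F i i = (1 : Matrix (Fin m) (Fin m) R) := by
    simp only [hF]
    rw [← map_sum, hEone, _root_.map_one]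
  have hFzz : F z z ≠ 0 := by
    intro h0
    have hallzero : ∀ i j, F i j = 0 := by
      intro i j
      have h1 : F i z * F z z = F i z := by rw [hmul]; simp
      have h2 : F i z * F z j = F i j := by rw [hmul]; simp
      rw [← h2, ← h1, h0, mul_zero, zero_mul]
    have h1 : (1 : Matrix (Fin m) (Fin m) R) = 0 := by
      rw [← hFone]
      simp [hallzero]
    exact one_ne_zero (congrFun (congrFun h1 z) z)
  obtain ⟨b, hb⟩ : ∃ b, (fun i => F z z i b) ≠ 0 := by
    by_contra hc
    push_neg at hc
    apply hFzz
    ext a b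
    exact congrFun (hc b) a
  set w : Fin m → R := fun i => F z z i b with hw
  have hcolw : F z z *ᵥ w = w := by
    funext a
    have := congrFun (congrFun (hmul z z z z) a) b
    simp only [if_pos rfl] at this
    simpa [Matrix.mul_apply, Matrix.mulVec, dotProduct, hw] using this
  obtain ⟨g, hge, hg1⟩ := Finset.extract_gcd w Finset.univ_nonempty
  set d : R := Finset.univ.gcd w with hd
  have hd0 : d ≠ 0 := by
    intro h0
    apply hb
    funext i
    exact Finset.gcd_eq_zero_iff.1 (hd ▸ h0) i (Finset.mem_univ i)
  have hwdg : w = fun i => d * g i := by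
    funext i; exact hge i (Finset.mem_univ i)
  have hg0 : g ≠ 0 := by
    intro h0
    rw [h0] at hg1
    have hz0 : Finset.univ.gcd (0 : Fin m → R) = 0 :=
      Finset.gcd_eq_zero_iff.2 fun i _ => rfl
    rw [hz0] at hg1
    exact one_ne_zero hg1.symm
  have hFg : F z z *ᵥ g = g := by
    have h1 : F z z *ᵥ (d • g) = d • g := by
      have : d • g = w := by funext i; rw [hwdg]; simp [smul_eq_mul]
      rw [this]; exact hcolw
    rw [Matrix.mulVec_smul] at h1
    funext i
    have := congrFun h1 i
    simp only [Pi.smul_apply, smul_eq_mul] at this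
    exact mul_left_cancel₀ hd0 this
  set G0 : Matrix (Fin m) (Fin m) R := Matrix.of fun a k => (F k z *ᵥ g) a with hG0
  have hFG : ∀ i j, F i j * G0 = G0 * E i j := by
    intro i j
    ext a c
    have h1 : (F i j * G0) a c = (F i j *ᵥ (F c z *ᵥ g)) a := by
      simp [Matrix.mul_apply, Matrix.mulVec, dotProduct, hG0, Finset.mul_sum, mul_assoc]
    have h2 : (G0 * E i j) a c = if c = j then G0 a i else 0 := by
      simp only [hE]
      rw [Matrix.mul_apply]
      by_cases h : c = j
      · subst h
        rw [if_pos rfl]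
        rw [Finset.sum_eq_single i (fun x _ hx => by simp [Matrix.single, Ne.symm hx]) (by simp)]
        simp [Matrix.single]
      · rw [if_neg h]
        apply Finset.sum_eq_zero
        intro x _
        simp only [Matrix.single, Matrix.of_apply]
        rw [if_neg, mul_zero]
        rintro ⟨h1, h2⟩
        exact h h2.symm
    rw [h1, Matrix.mulVec_mulVec, hmul, h2]
    by_cases h : j = c
    · rw [if_pos h, if_pos h.symm]
      rfl
    · rw [if_neg h, if_neg (Ne.symm h)]
      simp
  have hdet0 : G0.det ≠ 0 := matrixUnits_det_ne_zero F hmul z g hg0 hFg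
  have hdetunit : IsUnit G0.det := by
    by_contra hu
    obtain ⟨p, hpirr, hpdvd⟩ := WfDvdMonoid.exists_irreducible_factor hu hdet0
    have hp : Prime p := hpirr.prime
    set I : Ideal R := Ideal.span {p} with hI
    haveI : I.IsPrime := (Ideal.span_singleton_prime hp.ne_zero).2 hp
    set ψ : R →+* R ⧸ I := Ideal.Quotient.mk I with hψ
    set F' : Fin m → Fin m → Matrix (Fin m) (Fin m) (R ⧸ I) := fun i j => (F i j).map ψ with hF'
    have hmul' : ∀ i j k l, F' i j * F' k l = if j = k then F' i l else 0 := by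
      intro i j k l
      simp only [hF']
      rw [← Matrix.map_mul, hmul]
      split <;> simp
    have hg' : (fun i => ψ (g i)) ≠ 0 := by
      intro h0
      have hdvd : ∀ i, p ∣ g i := by
        intro i
        have := congrFun h0 i
        simpa [hψ, Ideal.Quotient.eq_zero_iff_mem, hI, Ideal.mem_span_singleton] using this
      have : p ∣ Finset.univ.gcd g := Finset.dvd_gcd fun i _ => hdvd i
      rw [hg1] at this
      exact hp.not_unit (isUnit_of_dvd_one this)
    have hFr' : F' z z *ᵥ (fun i => ψ (g i)) = fun i => ψ (g i) := by
      funext i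
      calc (F' z z *ᵥ fun i => ψ (g i)) i = (((F z z).map ψ) *ᵥ (ψ ∘ g)) i := rfl
        _ = ψ ((F z z *ᵥ g) i) := (RingHom.map_mulVec ψ (F z z) g i).symm
        _ = ψ (g i) := by rw [hFg]
    have hne := matrixUnits_det_ne_zero F' hmul' z (fun i => ψ (g i)) hg' hFr'
    apply hne
    have hmapeq : (Matrix.of fun a k => (F' k z *ᵥ fun i => ψ (g i)) a) = G0.map ψ := by
      ext a k
      exact (RingHom.map_mulVec ψ (F k z) g a).symm
    rw [hmapeq]
    rw [show (G0.map (ψ : R → R ⧸ I)).det = ψ G0.det from (RingHom.map_det ψ G0).symm]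
    simpa [hψ, Ideal.Quotient.eq_zero_iff_mem, hI, Ideal.mem_span_singleton] using hpdvd
  set U : GL (Fin m) R := Matrix.GeneralLinearGroup.mk'' G0 hdetunit with hU
  have hUval : (U : Matrix (Fin m) (Fin m) R) = G0 := rfl
  set Mi : Matrix (Fin m) (Fin m) R := (↑U⁻¹ : Matrix (Fin m) (Fin m) R) with hMi
  have hUinv : Mi * G0 = 1 := Units.inv_mul U
  have hUinv' : G0 * Mi = 1 := Units.mul_inv U
  have hcanL : ∀ X : Matrix (Fin m) (Fin m) R, G0 * (Mi * X) = X := by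
    intro X; rw [← mul_assoc, hUinv', one_mul]
  have hcanR : ∀ X : Matrix (Fin m) (Fin m) R, Mi * (G0 * X) = X := by
    intro X; rw [← mul_assoc, hUinv, one_mul]
  have hcanL' : ∀ X : Matrix (Fin m) (Fin m) R, X * G0 * Mi = X := by
    intro X; rw [mul_assoc, hUinv', mul_one]
  have hcanR' : ∀ X : Matrix (Fin m) (Fin m) R, X * Mi * G0 = X := by
    intro X; rw [mul_assoc, hUinv, mul_one]
  have hFE : ∀ i j, F i j = G0 * E i j * Mi := by
    intro i j
    rw [← hFG, hcanL']
  have hEMi : ∀ i j, E i j * Mi = Mi * F i j := by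
    intro i j
    rw [hFE]
    simp only [mul_assoc]
    rw [hcanR]
  -- the central ring hom
  set N : R → Matrix (Fin m) (Fin m) R := fun a => Mi * φ (a • 1) * G0 with hN
  have hcomm : ∀ a : R, ∀ i j : Fin m, Commute (single i j (1:R)) (N a) := by
    intro a i j
    have hcent : φ (a • 1) * F i j = F i j * φ (a • 1) := by
      simp only [hF]
      rw [← _root_.map_mul, ← _root_.map_mul, smul_mul_assoc, one_mul, mul_smul_comm, mul_one]
    show single i j 1 * N a = N a * single i j 1
    have hEij : single i j (1:R) = E i j := rfl
    rw [hEij]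
    simp only [hN]
    calc E i j * (Mi * φ (a • 1) * G0)
        = (E i j * Mi) * (φ (a • 1) * G0) := by simp only [mul_assoc]
      _ = (Mi * F i j) * (φ (a • 1) * G0) := by rw [hEMi]
      _ = Mi * ((F i j * φ (a • 1)) * G0) := by simp only [mul_assoc]
      _ = Mi * ((φ (a • 1) * F i j) * G0) := by rw [hcent]
      _ = Mi * (φ (a • 1) * (F i j * G0)) := by simp only [mul_assoc]
      _ = Mi * (φ (a • 1) * (G0 * E i j)) := by rw [hFG]
      _ = Mi * φ (a • 1) * G0 * E i j := by simp only [mul_assoc]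
  have hscalar : ∀ a : R, N a = Matrix.scalar (Fin m) ((N a) z z) := by
    intro a
    obtain ⟨c, hc⟩ := Matrix.mem_range_scalar_iff_commute_single'.2 (hcomm a)
    have hczz : (N a) z z = c := by
      rw [← hc, Matrix.scalar_apply, Matrix.diagonal_apply_eq]
    rw [hczz]
    exact hc.symm
  set φc : R →+* R :=
    { toFun := fun a => (N a) z z
      map_one' := by
        have h1 : N 1 = 1 := by
          simp only [hN, one_smul, _root_.map_one, mul_one]
          exact hUinv
        show (N 1) z z = 1
        rw [h1, Matrix.one_apply_eq]
      map_mul' := by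
        intro a b
        show (N (a * b)) z z = (N a) z z * (N b) z z
        have hab : N (a * b) = N a * N b := by
          simp only [hN]
          have hsm : ((a * b) • (1 : Matrix (Fin m) (Fin m) R)) = (a • 1) * (b • 1) := by
            rw [smul_mul_assoc, one_mul, smul_smul]
          rw [hsm, _root_.map_mul]
          calc Mi * (φ (a • 1) * φ (b • 1)) * G0
              = Mi * φ (a • 1) * (φ (b • 1) * G0) := by simp only [mul_assoc]
            _ = Mi * φ (a • 1) * (G0 * (Mi * (φ (b • 1) * G0))) := by rw [hcanL]
            _ = (Mi * φ (a • 1) * G0) * (Mi * φ (b • 1) * G0) := by simp only [mul_assoc]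
        have h2 : (N a * N b) z z = (N a) z z * (N b) z z := by
          conv_lhs => rw [hscalar a, hscalar b, ← _root_.map_mul]
          rw [Matrix.scalar_apply, Matrix.diagonal_apply_eq]
        rw [hab, h2]
      map_zero' := by
        show (N 0) z z = 0
        have h1 : N 0 = 0 := by simp [hN]
        rw [h1]
        rfl
      map_add' := by
        intro a b
        show (N (a + b)) z z = (N a) z z + (N b) z z
        have hab : N (a + b) = N a + N b := by
          simp only [hN, add_smul, map_add, mul_add, add_mul]
        rw [hab]
        rfl } with hφc
  have hφcdef : ∀ a, φc a = (N a) z z := fun a => rfl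
  have hφscal : ∀ a : R, φ (a • 1) = G0 * Matrix.scalar (Fin m) (φc a) * Mi := by
    intro a
    rw [hφcdef, ← hscalar a]
    simp only [hN]
    calc φ (a • 1) = G0 * (Mi * (φ (a • 1) * G0)) * Mi := by rw [hcanL, hcanL']
      _ = G0 * (Mi * φ (a • 1) * G0) * Mi := by simp only [mul_assoc]
  have hbasis : ∀ (i j : Fin m) (a : R),
      φ (single i j a) = G0 * single i j (φc a) * Mi := by
    intro i j a
    have h1 : single i j a = (a • (1 : Matrix (Fin m) (Fin m) R)) * E i j := by
      rw [smul_mul_assoc, one_mul]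
      simp only [hE]
      rw [Matrix.smul_single, smul_eq_mul, mul_one]
    have h2 : single i j (φc a) = Matrix.scalar (Fin m) (φc a) * E i j := by
      rw [Matrix.scalar_apply, ← Matrix.smul_eq_diagonal_mul]
      simp only [hE]
      rw [Matrix.smul_single, smul_eq_mul, mul_one]
    rw [h1, _root_.map_mul, hφscal a, hFdef, hFE i j, h2]
    calc G0 * Matrix.scalar (Fin m) (φc a) * Mi * (G0 * E i j * Mi)
        = G0 * (Matrix.scalar (Fin m) (φc a) * (Mi * (G0 * (E i j * Mi)))) := by
          simp only [mul_assoc]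
      _ = G0 * (Matrix.scalar (Fin m) (φc a) * (E i j * Mi)) := by rw [hcanR]
      _ = G0 * (Matrix.scalar (Fin m) (φc a) * E i j) * Mi := by simp only [mul_assoc]
  have hmain : ∀ A : Matrix (Fin m) (Fin m) R,
      φ A = G0 * A.map φc * Mi := by
    intro A
    conv_lhs => rw [matrix_eq_sum_single A]
    simp only [map_sum]
    have hmapA : (A.map φc) = ∑ i, ∑ j, single i j (φc (A i j)) := by
      conv_lhs => rw [matrix_eq_sum_single (A.map φc)]
      rfl
    calc ∑ i, ∑ j, φ (single i j (A i j))
        = ∑ i, ∑ j, G0 * single i j (φc (A i j)) * Mi := by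
          refine Finset.sum_congr rfl fun i _ => Finset.sum_congr rfl fun j _ => ?_
          exact hbasis i j (A i j)
      _ = G0 * (∑ i, ∑ j, single i j (φc (A i j))) * Mi := by
          simp only [Finset.mul_sum, Finset.sum_mul]
      _ = G0 * A.map φc * Mi := by rw [← hmapA]
  refine ⟨U, φc, fun A => hmain A, ?_⟩
  rintro G' ⟨φc', hG'⟩
  have hEmap : ∀ (χ : R →+* R) (i j : Fin m), (E i j).map χ = E i j := by
    intro χ i j
    simp only [hE]
    ext a c
    simp [Matrix.single, Matrix.map_apply, apply_ite]
  set Gm : Matrix (Fin m) (Fin m) R := (↑G' : Matrix (Fin m) (Fin m) R) with hGm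
  set Gi : Matrix (Fin m) (Fin m) R := (↑G'⁻¹ : Matrix (Fin m) (Fin m) R) with hGi
  have hGinv : Gi * Gm = 1 := Units.inv_mul G'
  have hGinv' : Gm * Gi = 1 := Units.mul_inv G'
  have hcanG : ∀ X : Matrix (Fin m) (Fin m) R, Gi * (Gm * X) = X := by
    intro X; rw [← mul_assoc, hGinv, one_mul]
  have hconj : ∀ i j, Gm * E i j * Gi = G0 * E i j * Mi := by
    intro i j
    have h1 := hG' (E i j)
    rw [hEmap] at h1
    have h2 := hmain (E i j)
    rw [hEmap] at h2
    rw [← h1, ← h2]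
  set D : Matrix (Fin m) (Fin m) R := Gi * G0 with hD
  have hDcomm : ∀ i j : Fin m, Commute (single i j (1:R)) D := by
    intro i j
    show single i j 1 * D = D * single i j 1
    have hEij : single i j (1:R) = E i j := rfl
    rw [hEij]
    simp only [hD]
    calc E i j * (Gi * G0)
        = Gi * (Gm * (E i j * (Gi * G0))) := (hcanG _).symm
      _ = Gi * ((Gm * E i j * Gi) * G0) := by simp only [mul_assoc]
      _ = Gi * ((G0 * E i j * Mi) * G0) := by rw [hconj]
      _ = Gi * (G0 * (E i j * (Mi * G0))) := by simp only [mul_assoc]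
      _ = Gi * (G0 * (E i j * 1)) := by rw [hUinv]
      _ = Gi * G0 * E i j := by rw [mul_one]; simp only [mul_assoc]
  obtain ⟨c, hc⟩ := Matrix.mem_range_scalar_iff_commute_single'.2 hDcomm
  have hDunit : IsUnit D := ⟨G'⁻¹ * U, rfl⟩
  have hcunit : IsUnit c := by
    have h1 : IsUnit D.det := (Matrix.isUnit_iff_isUnit_det D).1 hDunit
    rw [← hc, Matrix.scalar_apply, Matrix.det_diagonal, Finset.prod_const, Finset.card_univ,
      Fintype.card_fin] at h1
    exact (isUnit_pow_iff hm.ne').1 h1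
  obtain ⟨u, hu⟩ := hcunit
  refine ⟨u⁻¹, ?_⟩
  have hG0D : G0 = c • Gm := by
    have h1 : Gm * D = G0 := by
      rw [hD, ← mul_assoc, hGinv', one_mul]
    rw [← h1, ← hc]
    ext a c'
    rw [Matrix.scalar_apply, Matrix.mul_diagonal]
    simp [mul_comm]
  show Gm = (↑u⁻¹ : R) • (U : Matrix (Fin m) (Fin m) R)
  rw [hUval, hG0D, smul_smul]
  have h2 : (↑u⁻¹ : R) * c = 1 := by
    rw [← hu]
    exact u.inv_mul
  rw [h2, one_smul]
end

section
/- Let k be a field of characteristic p, M = k[T]/(T^p), ν multiplication by T and ∂ formal derivative. Then the trace of ν^{i}∂^{j} on M (for 0 ≤ i,j < p) is -δ_{i,p-1}·δ_{j,p-1}; i.e., the trace is -1 if i = j = p-1 and 0 otherwise. -/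
/-- Multiplication by `T` on `k[T]/(T^p)`, identified with `Fin p → k` via coefficients. -/
noncomputable def nuMap (k : Type*) [Field k] (p : ℕ) : (Fin p → k) →ₗ[k] (Fin p → k) :=
  LinearMap.pi fun j : Fin p =>
    if (j : ℕ) = 0 then 0
    else LinearMap.proj ⟨(j : ℕ) - 1, Nat.lt_of_le_of_lt (Nat.sub_le _ _) j.isLt⟩

/-- The formal derivative `d/dT` on `k[T]/(T^p)`, identified with `Fin p → k`. -/
noncomputable def delMap (k : Type*) [Field k] (p : ℕ) : (Fin p → k) →ₗ[k] (Fin p → k) :=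
  LinearMap.pi fun j : Fin p =>
    if h : (j : ℕ) + 1 < p then
      (((j : ℕ) + 1 : ℕ) : k) • LinearMap.proj (⟨(j : ℕ) + 1, h⟩ : Fin p)
    else 0

lemma nuMap_apply {k : Type*} [Field k] {p : ℕ} (f : Fin p → k) (n : Fin p) :
    nuMap k p f n =
      if h : (n : ℕ) = 0 then 0
      else f ⟨(n : ℕ) - 1, Nat.lt_of_le_of_lt (Nat.sub_le _ _) n.isLt⟩ := by
  simp only [nuMap, LinearMap.pi_apply]
  split_ifs with h <;> simp [h]

lemma delMap_apply {k : Type*} [Field k] {p : ℕ} (f : Fin p → k) (n : Fin p) :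
    delMap k p f n =
      if h : (n : ℕ) + 1 < p then (((n : ℕ) + 1 : ℕ) : k) * f ⟨(n : ℕ) + 1, h⟩ else 0 := by
  simp only [delMap, LinearMap.pi_apply]
  split_ifs with h <;> simp [h, smul_eq_mul]

lemma nuMap_pow_apply {k : Type*} [Field k] {p : ℕ} (i : ℕ) (f : Fin p → k) (n : Fin p) :
    (nuMap k p ^ i) f n =
      if h : i ≤ (n : ℕ) then
        f ⟨(n : ℕ) - i, Nat.lt_of_le_of_lt (Nat.sub_le _ _) n.isLt⟩
      else 0 := by
  induction i generalizing f with
  | zero => simp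
  | succ i ih =>
    rw [pow_succ, Module.End.mul_apply, ih]
    by_cases h1 : i ≤ (n : ℕ)
    · rw [dif_pos h1, nuMap_apply]
      by_cases h2 : (n : ℕ) - i = 0
      · rw [dif_pos h2, dif_neg (by omega)]
      · rw [dif_neg h2, dif_pos (by omega : i + 1 ≤ (n : ℕ))]
        congr 1
    · rw [dif_neg h1, dif_neg (by omega)]

lemma delMap_pow_apply {k : Type*} [Field k] {p : ℕ} (j : ℕ) (f : Fin p → k) (n : Fin p) :
    (delMap k p ^ j) f n =
      if h : (n : ℕ) + j < p then
        ((((n : ℕ) + j).descFactorial j : ℕ) : k) * f ⟨(n : ℕ) + j, h⟩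
      else 0 := by
  induction j generalizing f with
  | zero => simp [n.isLt]
  | succ j ih =>
    rw [pow_succ, Module.End.mul_apply, ih]
    by_cases h1 : (n : ℕ) + j < p
    · rw [dif_pos h1, delMap_apply]
      simp only
      by_cases h2 : (n : ℕ) + j + 1 < p
      · rw [dif_pos h2, dif_pos (by omega : (n : ℕ) + (j + 1) < p), ← mul_assoc]
        congr 1
        · rw [show (n : ℕ) + (j + 1) = ((n : ℕ) + j) + 1 from rfl, Nat.succ_descFactorial_succ]
          push_cast
          ring
      · rw [dif_neg h2, dif_neg (by omega), mul_zero]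
    · rw [dif_neg h1, dif_neg (by omega)]

lemma descFactorial_sum (i n : ℕ) :
    (i + 1) * ∑ l ∈ Finset.range n, Nat.descFactorial l i = Nat.descFactorial n (i + 1) := by
  induction n with
  | zero => simp
  | succ n ih =>
    rw [Finset.sum_range_succ, Nat.mul_add, ih, Nat.succ_descFactorial_succ]
    rcases lt_or_ge n i with h | h
    · rw [Nat.descFactorial_eq_zero_iff_lt.2 h, Nat.descFactorial_eq_zero_iff_lt.2 (by omega)]
      simp
    · rw [Nat.descFactorial_succ, ← Nat.add_mul]
      congr 1
      omega

theorem trace_nu_pow_del_pow (k : Type*) [Field k] (p : ℕ) (hp : p.Prime) [CharP k p]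
    (i j : ℕ) (hi : i < p) (hj : j < p) :
    LinearMap.trace k (Fin p → k)
        ((nuMap k p ^ i * delMap k p ^ j : Module.End k (Fin p → k)) : (Fin p → k) →ₗ[k] (Fin p → k)) =
      if i = p - 1 ∧ j = p - 1 then -1 else 0 := by
  haveI := Fact.mk hp
  have hp0 : 0 < p := hp.pos
  rw [LinearMap.trace_eq_matrix_trace k (Pi.basisFun k (Fin p)), Matrix.trace]
  simp only [Matrix.diag, LinearMap.toMatrix_apply, Pi.basisFun_repr, Pi.basisFun_apply,
    Module.End.mul_apply, nuMap_pow_apply, delMap_pow_apply]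
  have key : ∀ l : Fin p,
      (if h : i ≤ (l : ℕ) then
        (if h2 : (l : ℕ) - i + j < p then
          ((((l : ℕ) - i + j).descFactorial j : ℕ) : k) *
            (Pi.single l (1 : k) : Fin p → k) ⟨(l : ℕ) - i + j, h2⟩
        else 0)
      else 0) = if i = j then ((Nat.descFactorial (l : ℕ) i : ℕ) : k) else 0 := by
    intro l
    have hl := l.isLt
    by_cases h1 : i ≤ (l : ℕ)
    · rw [dif_pos h1]
      by_cases hij : i = j
      · subst hij
        rw [dif_pos (by omega : (l : ℕ) - i + i < p), if_pos rfl, Pi.single_apply,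
          if_pos (Fin.ext (by simp; omega)), Nat.sub_add_cancel h1, mul_one]
      · rw [if_neg hij]
        by_cases h2 : (l : ℕ) - i + j < p
        · rw [dif_pos h2, Pi.single_apply, if_neg (by simp only [Fin.ext_iff]; omega),
            mul_zero]
        · rw [dif_neg h2]
    · rw [dif_neg h1]
      by_cases hij : i = j
      · rw [if_pos hij, Nat.descFactorial_eq_zero_iff_lt.2 (by omega)]
        simp
      · rw [if_neg hij]
  rw [Finset.sum_congr rfl fun l _ => key l]
  by_cases hij : i = j
  · subst hij
    simp only [eq_self_iff_true, if_true]
    rw [← Nat.cast_sum, Fin.sum_univ_eq_sum_range (fun l => Nat.descFactorial l i)]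
    by_cases hi1 : i = p - 1
    · rw [if_pos ⟨hi1, hi1⟩]
      subst hi1
      obtain ⟨m, rfl⟩ : ∃ m, p = m + 1 := ⟨p - 1, by omega⟩
      simp only [Nat.add_sub_cancel]
      rw [Finset.sum_range_succ, Finset.sum_eq_zero
        (fun l hl => Nat.descFactorial_eq_zero_iff_lt.2 (Finset.mem_range.1 hl)),
        Nat.descFactorial_self, zero_add]
      have hw : ((Nat.factorial m : ℕ) : ZMod (m + 1)) = -1 := by
        have := ZMod.wilsons_lemma (m + 1)
        simpa using this
      have h2 := congrArg (ZMod.castHom (dvd_refl (m + 1)) k) hw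
      rw [map_natCast, map_neg, map_one] at h2
      exact h2
    · rw [if_neg (by tauto)]
      have hS := descFactorial_sum i p
      have hcast : ((i + 1 : ℕ) : k) * ((∑ l ∈ Finset.range p, Nat.descFactorial l i : ℕ) : k)
          = ((Nat.descFactorial p (i + 1) : ℕ) : k) := by
        rw [← Nat.cast_mul, hS]
      have hz : ((Nat.descFactorial p (i + 1) : ℕ) : k) = 0 := by
        obtain ⟨m, rfl⟩ : ∃ m, p = m + 1 := ⟨p - 1, by omega⟩
        rw [Nat.succ_descFactorial_succ]
        push_cast
        rw [show ((m : k) + 1) = ((m + 1 : ℕ) : k) by push_cast; ring,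
          CharP.cast_eq_zero k (m + 1), zero_mul]
      have hne : ((i + 1 : ℕ) : k) ≠ 0 := by
        intro h
        have := (CharP.cast_eq_zero_iff k p (i + 1)).1 h
        have := Nat.le_of_dvd (by omega) this
        omega
      have := hcast.trans hz
      rcases mul_eq_zero.1 this with h | h
      · exact absurd h hne
      · exact h
  · rw [if_neg (by rintro ⟨h1, h2⟩; omega)]
    rw [Finset.sum_eq_zero fun l _ => if_neg hij]
end

section
/- Let k be a field of characteristic p and S = k[y₁, y₂] with formal partial derivations ∂₁, ∂₂. If a closed 2-form f·dy₁∧dy₂ (f ∈ S arbitrary, every 2-form in two variables is closed) is given, then there exist h₁, h₂ ∈ S and c ∈ k[y₁^p, y₂^p] such that f = ∂₁h₂ − ∂₂h₁ + c·y₁^{p-1}y₂^{p-1}. -/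
open MvPolynomial

private lemma monomial_fin_two {k : Type*} [Field k] (u : Fin 2 →₀ ℕ) (a : k) :
    (monomial u a : MvPolynomial (Fin 2) k) = C a * X 0 ^ (u 0) * X 1 ^ (u 1) := by
  have hu : u = Finsupp.single 0 (u 0) + Finsupp.single 1 (u 1) := by
    ext x; fin_cases x <;> simp [Finsupp.single_apply]
  rw [hu]
  simp only [Finsupp.add_apply, Finsupp.single_apply]
  norm_num
  rw [C_apply, X_pow_eq_monomial, X_pow_eq_monomial, monomial_mul, monomial_mul,
    mul_one, mul_one, zero_add]

private lemma mem_adjoin_aux {k : Type*} [Field k] (p i j : ℕ) (a : k) :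
    C a * ((X 0 : MvPolynomial (Fin 2) k) ^ p) ^ i *
      ((X 1 : MvPolynomial (Fin 2) k) ^ p) ^ j ∈ Algebra.adjoin k
          ({(X 0 : MvPolynomial (Fin 2) k) ^ p, (X 1 : MvPolynomial (Fin 2) k) ^ p} :
            Set (MvPolynomial (Fin 2) k)) :=
  Subalgebra.mul_mem _
    (Subalgebra.mul_mem _ (Subalgebra.algebraMap_mem _ a)
      (Subalgebra.pow_mem _ (Algebra.subset_adjoin (Set.mem_insert _ _)) _))
    (Subalgebra.pow_mem _ (Algebra.subset_adjoin (Set.mem_insert_of_mem _ (Set.mem_singleton _))) _)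

private lemma case3_aux {k : Type*} [Field k] (p i j : ℕ) (a : k) :
    (C a : MvPolynomial (Fin 2) k) * X 0 ^ (p * i + (p - 1)) * X 1 ^ (p * j + (p - 1)) =
      C a * ((X 0 : MvPolynomial (Fin 2) k) ^ p) ^ i *
        ((X 1 : MvPolynomial (Fin 2) k) ^ p) ^ j * X 0 ^ (p - 1) * X 1 ^ (p - 1) := by
  rw [← pow_mul, ← pow_mul, pow_add, pow_add]
  ring

private lemma case_h2_aux {k : Type*} [Field k] (u : Fin 2 →₀ ℕ) (a b : k) (hb : b ≠ 0) :
    (monomial u (b⁻¹ * a * b) : MvPolynomial (Fin 2) k) = monomial u a := by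
  congr 1
  field_simp

theorem deRham_H2_two_variables {k : Type*} [Field k] (p : ℕ) (hp : p.Prime) [CharP k p]
    (f : MvPolynomial (Fin 2) k) :
    ∃ h₁ h₂ c : MvPolynomial (Fin 2) k,
      c ∈ Algebra.adjoin k
          ({(X 0 : MvPolynomial (Fin 2) k) ^ p, (X 1 : MvPolynomial (Fin 2) k) ^ p} :
            Set (MvPolynomial (Fin 2) k)) ∧
      f = pderiv 0 h₂ - pderiv 1 h₁ + c * X 0 ^ (p - 1) * X 1 ^ (p - 1) := by
  induction f using MvPolynomial.induction_on' with
  | add q r hq hr =>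
    obtain ⟨h₁, h₂, c, hc, hfq⟩ := hq
    obtain ⟨g₁, g₂, d, hd, hfr⟩ := hr
    refine ⟨h₁ + g₁, h₂ + g₂, c + d, Subalgebra.add_mem _ hc hd, ?_⟩
    rw [hfq, hfr, map_add, map_add]
    ring
  | monomial u a =>
    obtain ⟨m, hm⟩ : ∃ m, u 0 = m := ⟨u 0, rfl⟩
    obtain ⟨n, hn⟩ : ∃ n, u 1 = n := ⟨u 1, rfl⟩
    by_cases hdm : p ∣ m + 1
    · by_cases hdn : p ∣ n + 1
      · obtain ⟨i, hi⟩ := hdm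
        obtain ⟨j, hj⟩ := hdn
        have h2 := hp.two_le
        obtain ⟨i, rfl⟩ : ∃ i', i = i' + 1 := by
          refine ⟨i - 1, ?_⟩
          rcases Nat.eq_zero_or_pos i with h | h
          · subst h; omega
          · omega
        obtain ⟨j, rfl⟩ : ∃ j', j = j' + 1 := by
          refine ⟨j - 1, ?_⟩
          rcases Nat.eq_zero_or_pos j with h | h
          · subst h; omega
          · omega
        have hpi : p * (i + 1) = p * i + p := by ring
        have hpj : p * (j + 1) = p * j + p := by ring
        have hmeq : m = p * i + (p - 1) := by omega
        have hneq : n = p * j + (p - 1) := by omega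
        refine ⟨0, 0, C a * ((X 0 : MvPolynomial (Fin 2) k) ^ p) ^ i *
            ((X 1 : MvPolynomial (Fin 2) k) ^ p) ^ j, mem_adjoin_aux p i j a, ?_⟩
        rw [_root_.monomial_fin_two, hm, hn, map_zero, map_zero, sub_zero, zero_add, hmeq, hneq]
        exact case3_aux p i j a
      · have hcast : ((n + 1 : ℕ) : k) ≠ 0 := by
          rw [Ne, CharP.cast_eq_zero_iff k p]; exact hdn
        refine ⟨-monomial (u + Finsupp.single 1 1) (((n + 1 : ℕ) : k)⁻¹ * a), 0, 0,
          Subalgebra.zero_mem _, ?_⟩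
        rw [map_zero, map_neg, sub_neg_eq_add, zero_add, zero_mul, zero_mul, add_zero,
          pderiv_monomial, add_tsub_cancel_right]
        simp only [Finsupp.add_apply, Finsupp.single_eq_same, hn]
        exact (case_h2_aux u a _ hcast).symm
    · have hcast : ((m + 1 : ℕ) : k) ≠ 0 := by
        rw [Ne, CharP.cast_eq_zero_iff k p]; exact hdm
      refine ⟨0, monomial (u + Finsupp.single 0 1) (((m + 1 : ℕ) : k)⁻¹ * a), 0,
        Subalgebra.zero_mem _, ?_⟩
      rw [map_zero, sub_zero, zero_mul, zero_mul, add_zero, pderiv_monomial,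
        add_tsub_cancel_right]
      simp only [Finsupp.add_apply, Finsupp.single_eq_same, hm]
      exact (case_h2_aux u a _ hcast).symm
end
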